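/- Let θ, τ be permutations each of which begins with its maximum or ends with its minimum (negative permutations), let a, b, c, d be non-negative integers, and write k for the increasing permutation of size k. Then a ⊕ θ ⊕ b ≤ c ⊕ τ ⊕ d if and only if max(0, a−c) ⊕ θ ⊕ max(0, b−d) ≤ τ. -/

import Mathlib

open Equiv Filter

/-- A permutation pattern: a size together with a permutation of that size. -/
abbrev Pattern := Σ n : ℕ, Equiv.Perm (Fin n)

/-- Direct sum of permutations: `α` to the left of and below `β`. -/
def sumPerm {m n : ℕ} (α : Equiv.Perm (Fin m)) (β : Equiv.Perm (Fin n)) :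
    Equiv.Perm (Fin (m + n)) :=
  finSumFinEquiv.symm.trans ((α.sumCongr β).trans finSumFinEquiv)

/-- Skew sum of permutations: `α` to the left of and above `β`. -/
def skewPerm {m n : ℕ} (α : Equiv.Perm (Fin m)) (β : Equiv.Perm (Fin n)) :
    Equiv.Perm (Fin (m + n)) :=
  finSumFinEquiv.symm.trans ((α.sumCongr β).trans
    ((Equiv.sumComm (Fin m) (Fin n)).trans (finSumFinEquiv.trans (finCongr (Nat.add_comm n m)))))

/-- Pattern containment: `Contains p q` means `p` is contained (as a pattern) in `q`. -/
def Contains (p q : Pattern) : Prop :=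
  ∃ f : Fin p.1 → Fin q.1, StrictMono f ∧ ∀ s t, p.2 s < p.2 t ↔ q.2 (f s) < q.2 (f t)

def sumP (p q : Pattern) : Pattern := ⟨p.1 + q.1, sumPerm p.2 q.2⟩
def skewP (p q : Pattern) : Pattern := ⟨p.1 + q.1, skewPerm p.2 q.2⟩

/-- The singleton permutation 1. -/
def onePat : Pattern := ⟨1, 1⟩
/-- The increasing permutation of size `k`. -/
def idPat (k : ℕ) : Pattern := ⟨k, 1⟩
/-- The decreasing permutation of size `k`. -/
def revPat (k : ℕ) : Pattern := ⟨k, Fin.revPerm⟩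

def BeginsWithMin (p : Pattern) : Prop := ∃ h : 0 < p.1, p.2 ⟨0, h⟩ = ⟨0, h⟩
def EndsWithMax (p : Pattern) : Prop :=
  ∃ h : 0 < p.1, p.2 ⟨p.1 - 1, by omega⟩ = ⟨p.1 - 1, by omega⟩
def BeginsWithMax (p : Pattern) : Prop :=
  ∃ h : 0 < p.1, p.2 ⟨0, h⟩ = ⟨p.1 - 1, by omega⟩
def EndsWithMin (p : Pattern) : Prop :=
  ∃ h : 0 < p.1, p.2 ⟨p.1 - 1, by omega⟩ = ⟨0, h⟩

def IsIncreasingP (p : Pattern) : Prop := ∀ i j : Fin p.1, i ≤ j → p.2 i ≤ p.2 j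
def IsDecreasingP (p : Pattern) : Prop := ∀ i j : Fin p.1, i ≤ j → p.2 j ≤ p.2 i
/-- Monotone permutations (increasing or decreasing). -/
def MonotoneP (p : Pattern) : Prop := IsIncreasingP p ∨ IsDecreasingP p
/-- A crossed permutation is one that is not monotone. -/
def CrossedP (p : Pattern) : Prop := ¬ MonotoneP p
/-- Positive: size at least 2, begins with its minimum or ends with its maximum. -/
def PositiveP (p : Pattern) : Prop := 2 ≤ p.1 ∧ (BeginsWithMin p ∨ EndsWithMax p)
/-- Negative: size at least 2, begins with its maximum or ends with its minimum. -/
def NegativeP (p : Pattern) : Prop := 2 ≤ p.1 ∧ (BeginsWithMax p ∨ EndsWithMin p)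

/-- The class X: the closure of {1} under π ↦ 1⊕π, 1⊖π, π⊕1, π⊖1. -/
inductive InX : Pattern → Prop
  | base : InX onePat
  | sumL {p : Pattern} : InX p → InX (sumP onePat p)
  | skewL {p : Pattern} : InX p → InX (skewP onePat p)
  | sumR {p : Pattern} : InX p → InX (sumP p onePat)
  | skewR {p : Pattern} : InX p → InX (skewP p onePat)

section helpers

lemma sumPerm_lt {m n : ℕ} (α : Equiv.Perm (Fin m)) (β : Equiv.Perm (Fin n))
    (i : ℕ) (hi : i < m + n) (h : i < m) :
    ((sumPerm α β) ⟨i, hi⟩).val = (α ⟨i, h⟩).val := by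
  have hi' : (⟨i, hi⟩ : Fin (m + n)) = Fin.castAdd n ⟨i, h⟩ := by ext; simp
  rw [hi']
  simp only [sumPerm, Equiv.trans_apply, finSumFinEquiv_symm_apply_castAdd,
    Equiv.sumCongr_apply, Sum.map_inl, finSumFinEquiv_apply_left, Fin.coe_castAdd]

lemma sumPerm_ge {m n : ℕ} (α : Equiv.Perm (Fin m)) (β : Equiv.Perm (Fin n))
    (i : ℕ) (hi : i < m + n) (h : m ≤ i) :
    ((sumPerm α β) ⟨i, hi⟩).val = m + (β ⟨i - m, by omega⟩).val := by
  have hi' : (⟨i, hi⟩ : Fin (m + n)) = Fin.natAdd m ⟨i - m, by omega⟩ := by ext; simp; omega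
  rw [hi']
  simp only [sumPerm, Equiv.trans_apply, finSumFinEquiv_symm_apply_natAdd,
    Equiv.sumCongr_apply, Sum.map_inr, finSumFinEquiv_apply_right, Fin.coe_natAdd]

lemma trip_val' (q : Pattern) (a b : ℕ) (i : ℕ) (hi : i < a + q.1 + b) :
    ((sumP (sumP (idPat a) q) (idPat b)).2 ⟨i, hi⟩).val =
      if h0 : i < a then i
      else if h : i < a + q.1 then a + (q.2 ⟨i - a, by omega⟩).val
      else i := by
  show ((sumPerm (sumPerm (1 : Equiv.Perm (Fin a)) q.2) (1 : Equiv.Perm (Fin b))) ⟨i, hi⟩).val = _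
  rcases lt_or_ge i (a + q.1) with h | h
  · rw [sumPerm_lt _ _ i hi h]
    rcases lt_or_ge i a with h2 | h2
    · rw [sumPerm_lt _ _ i h h2, dif_pos h2]
      rfl
    · rw [sumPerm_ge _ _ i h h2, dif_neg (by omega), dif_pos h]
  · rw [sumPerm_ge _ _ i hi (by omega), dif_neg (by omega), dif_neg (by omega)]
    show a + q.1 + ((1 : Equiv.Perm (Fin b)) ⟨i - (a + q.1), _⟩).val = _
    simp only [Equiv.Perm.coe_one, id_eq]
    omega

lemma trip_val (q : Pattern) (a b : ℕ) (i : Fin (a + q.1 + b)) :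
    ((sumP (sumP (idPat a) q) (idPat b)).2 i).val =
      if h0 : i.val < a then i.val
      else if h : i.val < a + q.1 then a + (q.2 ⟨i.val - a, by omega⟩).val
      else i.val := by
  have := trip_val' q a b i.val i.isLt
  exact this

lemma perm_val_congr {n : ℕ} (σ : Equiv.Perm (Fin n)) {x y : ℕ} (hx : x < n) (hy : y < n)
    (h : x = y) : (σ ⟨x, hx⟩).val = (σ ⟨y, hy⟩).val := by subst h; rfl

lemma perm_val_ne {n : ℕ} (σ : Equiv.Perm (Fin n)) {x y : ℕ} (hx : x < n) (hy : y < n)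
    (h : x ≠ y) : (σ ⟨x, hx⟩).val ≠ (σ ⟨y, hy⟩).val := by
  intro hv
  exact h (by simpa [Fin.ext_iff] using σ.injective (Fin.val_injective hv))

lemma smono_le {N M : ℕ} {f : Fin N → Fin M} (hf : StrictMono f) :
    ∀ k (h : k < N), k ≤ (f ⟨k, h⟩).val := by
  intro k
  induction k with
  | zero => intro h; omega
  | succ k ih =>
    intro h
    have h1 : k < N := by omega
    have hlt : f ⟨k, h1⟩ < f ⟨k + 1, h⟩ := hf (by simp [Fin.lt_def])
    have := ih h1
    rw [Fin.lt_def] at hlt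
    omega

lemma smono_add_le {N M : ℕ} {f : Fin N → Fin M} (hf : StrictMono f) :
    ∀ k (i : ℕ) (hi : i < N) (hik : i + k < N),
      (f ⟨i, hi⟩).val + k ≤ (f ⟨i + k, hik⟩).val := by
  intro k
  induction k with
  | zero => intro i hi hik; simp
  | succ k ih =>
    intro i hi hik
    have h1 : i + k < N := by omega
    have hlt : f ⟨i + k, h1⟩ < f ⟨i + (k + 1), hik⟩ := hf (by simp [Fin.lt_def])
    have := ih i hi h1
    rw [Fin.lt_def] at hlt
    omega

lemma shift_val (p : Pattern) (a b e e' a0 : ℕ) (h1 : a0 + e = a)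
    (h2 : a0 + (e + p.1 + e') ≤ a + p.1 + b)
    (j : ℕ) (hj : j < e + p.1 + e') (hL : a0 + j < a + p.1 + b) :
    ((sumP (sumP (idPat a) p) (idPat b)).2 ⟨a0 + j, hL⟩).val
      = a0 + ((sumP (sumP (idPat e) p) (idPat e')).2 ⟨j, hj⟩).val := by
  rw [trip_val', trip_val']
  rcases lt_or_ge j e with h | h
  · rw [dif_pos (show a0 + j < a by omega), dif_pos (show j < e from h)]
  rcases lt_or_ge j (e + p.1) with h' | h'
  · rw [dif_neg (show ¬(a0 + j < a) by omega), dif_pos (show a0 + j < a + p.1 by omega),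
      dif_neg (show ¬(j < e) by omega), dif_pos (show j < e + p.1 from h')]
    rw [perm_val_congr p.2 (by omega) (by omega) (show a0 + j - a = j - e by omega)]
    omega
  · rw [dif_neg (show ¬(a0 + j < a) by omega), dif_neg (show ¬(a0 + j < a + p.1) by omega),
      dif_neg (show ¬(j < e) by omega), dif_neg (show ¬(j < e + p.1) by omega)]

lemma shift_val' (p : Pattern) (a b e e' a0 : ℕ) (h1 : a0 + e = a)
    (h2 : a0 + (e + p.1 + e') ≤ a + p.1 + b)
    (i : ℕ) (hi : i < a + p.1 + b) (hlo : a0 ≤ i) (hhi : i < a0 + (e + p.1 + e')) :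
    ((sumP (sumP (idPat a) p) (idPat b)).2 ⟨i, hi⟩).val
      = a0 + ((sumP (sumP (idPat e) p) (idPat e')).2
          (⟨i - a0, by omega⟩ : Fin (e + p.1 + e'))).val := by
  erw [trip_val', trip_val']
  rcases lt_or_ge i (a0 + e) with h | h
  · rw [dif_pos (show i < a by omega), dif_pos (show i - a0 < e by omega)]
    omega
  rcases lt_or_ge i (a0 + e + p.1) with h' | h'
  · rw [dif_neg (show ¬(i < a) by omega), dif_pos (show i < a + p.1 by omega),
      dif_neg (show ¬(i - a0 < e) by omega), dif_pos (show i - a0 < e + p.1 by omega)]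
    rw [perm_val_congr p.2 (by omega) (by omega) (show i - a = i - a0 - e by omega)]
    omega
  · rw [dif_neg (show ¬(i < a) by omega), dif_neg (show ¬(i < a + p.1) by omega),
      dif_neg (show ¬(i - a0 < e) by omega), dif_neg (show ¬(i - a0 < e + p.1) by omega)]
    omega

end helpers

set_option maxHeartbeats 1000000 in
/-- for negative θ, τ and nonnegative integers a,b,c,d,
`a ⊕ θ ⊕ b ≤ c ⊕ τ ⊕ d ↔ max(0,a−c) ⊕ θ ⊕ max(0,b−d) ≤ τ`
(`a - c` below is truncated subtraction on ℕ, i.e. `max (0, a - c)`). -/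
theorem sum_monotone_contains_iff (θ τ : Pattern)
    (hθ : NegativeP θ) (hτ : NegativeP τ) (a b c d : ℕ) :
    Contains (sumP (sumP (idPat a) θ) (idPat b)) (sumP (sumP (idPat c) τ) (idPat d)) ↔
      Contains (sumP (sumP (idPat (a - c)) θ) (idPat (b - d))) τ := by
  obtain ⟨hθ2, hθneg⟩ := hθ
  set e := a - c with he
  set e' := b - d with he'
  set a0 := a - e with ha0
  have ha0e : a0 + e = a := by omega
  have ha0c : a0 ≤ c := by omega
  have he'b : e' ≤ b := by omega
  -- value helpers for the big target pattern
  have hQ1 : ∀ y : Fin (c + τ.1 + d), y.val < c →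
      ((sumP (sumP (idPat c) τ) (idPat d)).2 y).val = y.val := by
    intro y hy; rw [trip_val, dif_pos hy]
  have hQm : ∀ (y : Fin (c + τ.1 + d)) (h1 : c ≤ y.val) (h2 : y.val < c + τ.1),
      ((sumP (sumP (idPat c) τ) (idPat d)).2 y).val = c + (τ.2 ⟨y.val - c, by omega⟩).val := by
    intro y h1 h2; rw [trip_val, dif_neg (by omega), dif_pos h2]
  have hQmb : ∀ (y : Fin (c + τ.1 + d)), c ≤ y.val → y.val < c + τ.1 →
      c ≤ ((sumP (sumP (idPat c) τ) (idPat d)).2 y).val ∧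
        ((sumP (sumP (idPat c) τ) (idPat d)).2 y).val < c + τ.1 := by
    intro y h1 h2
    rw [hQm y h1 h2]
    have := (τ.2 ⟨y.val - c, by omega⟩).isLt
    omega
  have hQ3 : ∀ y : Fin (c + τ.1 + d), c + τ.1 ≤ y.val →
      ((sumP (sumP (idPat c) τ) (idPat d)).2 y).val = y.val := by
    intro y hy; rw [trip_val, dif_neg (by omega), dif_neg (by omega)]
  -- value helpers for the big source pattern
  have hP1 : ∀ (i : ℕ) (hi : i < a + θ.1 + b), i < a →
      ((sumP (sumP (idPat a) θ) (idPat b)).2 ⟨i, hi⟩).val = i := by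
    intro i hi h; rw [trip_val', dif_pos h]
  have hPm : ∀ (i : ℕ) (hi : i < a + θ.1 + b) (h1 : a ≤ i) (h2 : i < a + θ.1),
      ((sumP (sumP (idPat a) θ) (idPat b)).2 ⟨i, hi⟩).val =
        a + (θ.2 ⟨i - a, by omega⟩).val := by
    intro i hi h1 h2; rw [trip_val', dif_neg (by omega), dif_pos h2]
  have hP3 : ∀ (i : ℕ) (hi : i < a + θ.1 + b), a + θ.1 ≤ i →
      ((sumP (sumP (idPat a) θ) (idPat b)).2 ⟨i, hi⟩).val = i := by
    intro i hi h; rw [trip_val', dif_neg (by omega), dif_neg (by omega)]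
  constructor
  · rintro ⟨(f : Fin (a + θ.1 + b) → Fin (c + τ.1 + d)), hf, hfv⟩
    have hfv' : ∀ s t : Fin (a + θ.1 + b),
        (((sumP (sumP (idPat a) θ) (idPat b)).2 s).val <
            ((sumP (sumP (idPat a) θ) (idPat b)).2 t).val ↔
          ((sumP (sumP (idPat c) τ) (idPat d)).2 (f s)).val <
            ((sumP (sumP (idPat c) τ) (idPat d)).2 (f t)).val) := by
      intro s t
      have := hfv s t
      rwa [Fin.lt_def, Fin.lt_def] at this
    -- the θ block must land in the τ block
    have claim1 : ∀ (i : ℕ) (h3 : i < a + θ.1 + b), a ≤ i → i < a + θ.1 →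
        c ≤ (f ⟨i, h3⟩).val ∧ (f ⟨i, h3⟩).val < c + τ.1 := by
      rcases hθneg with ⟨hpos, hmax⟩ | ⟨hpos, hmin⟩
      · -- θ begins with its maximum
        have hmaxv : (θ.2 ⟨0, hpos⟩).val = θ.1 - 1 := congrArg Fin.val hmax
        have ha : a < a + θ.1 + b := by omega
        have hvPa : ((sumP (sumP (idPat a) θ) (idPat b)).2 ⟨a, ha⟩).val = a + (θ.1 - 1) := by
          rw [hPm a ha le_rfl (by omega),
            perm_val_congr θ.2 (by omega) hpos (show a - a = 0 by omega), hmaxv]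
        have hstep : ∀ (i : ℕ) (h3 : i < a + θ.1 + b), a < i → i < a + θ.1 →
            ((sumP (sumP (idPat c) τ) (idPat d)).2 (f ⟨i, h3⟩)).val <
              ((sumP (sumP (idPat c) τ) (idPat d)).2 (f ⟨a, ha⟩)).val := by
          intro i h3 hi1 hi2
          have h4 := (hfv' ⟨i, h3⟩ ⟨a, ha⟩).mp
          apply h4
          erw [hvPa, hPm i h3 (by omega) hi2]
          have hne := perm_val_ne θ.2 (by omega) hpos (show i - a ≠ 0 by omega)
          have := (θ.2 ⟨i - a, by omega⟩).isLt
          omega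
        -- f ⟨a⟩ lands in the τ block
        have hx : c ≤ (f ⟨a, ha⟩).val ∧ (f ⟨a, ha⟩).val < c + τ.1 := by
          have ha1 : a + 1 < a + θ.1 + b := by omega
          have hlt1 := hstep (a + 1) ha1 (by omega) (by omega)
          have hmono : (f ⟨a, ha⟩).val < (f ⟨a + 1, ha1⟩).val := by
            have := hf (show (⟨a, ha⟩ : Fin (a + θ.1 + b)) < ⟨a + 1, ha1⟩ by
              rw [Fin.mk_lt_mk]; omega)
            exact this
          rcases lt_or_ge (f ⟨a, ha⟩).val c with hc | hc
          · exfalso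
            have hqa := hQ1 _ hc
            rcases lt_or_ge (f ⟨a + 1, ha1⟩).val c with hc2 | hc2
            · have := hQ1 _ hc2; omega
            · rcases lt_or_ge (f ⟨a + 1, ha1⟩).val (c + τ.1) with hc3 | hc3
              · have := hQmb _ hc2 hc3; omega
              · have := hQ3 _ hc3; omega
          rcases lt_or_ge (f ⟨a, ha⟩).val (c + τ.1) with hcm | hcm
          · exact ⟨hc, hcm⟩
          · exfalso
            have hqa := hQ3 _ hcm
            have hc2 : c + τ.1 ≤ (f ⟨a + 1, ha1⟩).val := by omega
            have := hQ3 _ hc2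
            omega
        intro i h3 hi1 hi2
        rcases eq_or_lt_of_le hi1 with rfl | hi1'
        · exact hx
        have hlt1 := hstep i h3 hi1' hi2
        have hmono : (f ⟨a, ha⟩).val < (f ⟨i, h3⟩).val := by
          have := hf (show (⟨a, ha⟩ : Fin (a + θ.1 + b)) < ⟨i, h3⟩ by
            rw [Fin.mk_lt_mk]; omega)
          exact this
        have hqx := hQmb _ hx.1 hx.2
        constructor
        · omega
        · rcases lt_or_ge (f ⟨i, h3⟩).val (c + τ.1) with hc3 | hc3
          · exact hc3
          · exfalso; have := hQ3 _ hc3; omega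
      · -- θ ends with its minimum
        have hminv : (θ.2 ⟨θ.1 - 1, by omega⟩).val = 0 := congrArg Fin.val hmin
        have hy' : a + θ.1 - 1 < a + θ.1 + b := by omega
        have hvPy : ((sumP (sumP (idPat a) θ) (idPat b)).2 ⟨a + θ.1 - 1, hy'⟩).val = a := by
          rw [hPm _ hy' (by omega) (by omega),
            perm_val_congr θ.2 (by omega) (by omega) (show a + θ.1 - 1 - a = θ.1 - 1 by omega),
            hminv]
          omega
        have hstep : ∀ (i : ℕ) (h3 : i < a + θ.1 + b), a ≤ i → i < a + θ.1 - 1 →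
            ((sumP (sumP (idPat c) τ) (idPat d)).2 (f ⟨a + θ.1 - 1, hy'⟩)).val <
              ((sumP (sumP (idPat c) τ) (idPat d)).2 (f ⟨i, h3⟩)).val := by
          intro i h3 hi1 hi2
          have h4 := (hfv' ⟨a + θ.1 - 1, hy'⟩ ⟨i, h3⟩).mp
          apply h4
          erw [hvPy, hPm i h3 (by omega) (by omega)]
          have hne := perm_val_ne θ.2 (by omega) (show θ.1 - 1 < θ.1 by omega)
            (show i - a ≠ θ.1 - 1 by omega)
          have h6 := hminv
          omega
        have hy : c ≤ (f ⟨a + θ.1 - 1, hy'⟩).val ∧ (f ⟨a + θ.1 - 1, hy'⟩).val < c + τ.1 := by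
          have ha1 : a + θ.1 - 2 < a + θ.1 + b := by omega
          have hlt1 := hstep (a + θ.1 - 2) ha1 (by omega) (by omega)
          have hmono : (f ⟨a + θ.1 - 2, ha1⟩).val < (f ⟨a + θ.1 - 1, hy'⟩).val := by
            have := hf (show (⟨a + θ.1 - 2, ha1⟩ : Fin (a + θ.1 + b)) < ⟨a + θ.1 - 1, hy'⟩ by
              rw [Fin.mk_lt_mk]; omega)
            exact this
          rcases lt_or_ge (f ⟨a + θ.1 - 1, hy'⟩).val c with hc | hc
          · exfalso
            have hqy := hQ1 _ hc
            have hc2 : (f ⟨a + θ.1 - 2, ha1⟩).val < c := by omega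
            have := hQ1 _ hc2
            omega
          rcases lt_or_ge (f ⟨a + θ.1 - 1, hy'⟩).val (c + τ.1) with hcm | hcm
          · exact ⟨hc, hcm⟩
          · exfalso
            have hqy := hQ3 _ hcm
            rcases lt_or_ge (f ⟨a + θ.1 - 2, ha1⟩).val c with hc2 | hc2
            · have := hQ1 _ hc2; omega
            · rcases lt_or_ge (f ⟨a + θ.1 - 2, ha1⟩).val (c + τ.1) with hc3 | hc3
              · have := hQmb _ hc2 hc3; omega
              · have := hQ3 _ hc3; omega
        intro i h3 hi1 hi2
        rcases eq_or_lt_of_le (show i ≤ a + θ.1 - 1 by omega) with heq | hi2'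
        · have : (⟨i, h3⟩ : Fin (a + θ.1 + b)) = ⟨a + θ.1 - 1, hy'⟩ := by
            rw [Fin.mk.injEq]; omega
          erw [this]; exact hy
        have hlt1 := hstep i h3 hi1 (by omega)
        have hmono : (f ⟨i, h3⟩).val < (f ⟨a + θ.1 - 1, hy'⟩).val := by
          have := hf (show (⟨i, h3⟩ : Fin (a + θ.1 + b)) < ⟨a + θ.1 - 1, hy'⟩ by
            rw [Fin.mk_lt_mk]; omega)
          exact this
        have hqy := hQmb _ hy.1 hy.2
        constructor
        · rcases lt_or_ge (f ⟨i, h3⟩).val c with hc | hc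
          · exfalso; have := hQ1 _ hc; omega
          · exact hc
        · omega
    -- total size bound
    have hNM : a + θ.1 + b ≤ c + τ.1 + d := by
      have h1 := smono_le hf (a + θ.1 + b - 1) (show a + θ.1 + b - 1 < a + θ.1 + b by omega)
      have h2 : (f (⟨a + θ.1 + b - 1, by omega⟩ : Fin (a + θ.1 + b))).val < c + τ.1 + d :=
        Fin.isLt _
      omega
    -- combined landing bound
    have hbound : ∀ (j : ℕ) (hj : j < e + θ.1 + e') (hL : a0 + j < a + θ.1 + b),
        c ≤ (f ⟨a0 + j, hL⟩).val ∧ (f ⟨a0 + j, hL⟩).val < c + τ.1 := by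
      intro j hj hL
      rcases lt_or_ge j e with h | h
      · -- prefix points
        have h1 : c ≤ a0 + j := by omega
        have h2 := smono_le hf (a0 + j) hL
        have ha : a < a + θ.1 + b := by omega
        have hmono : (f ⟨a0 + j, hL⟩).val < (f ⟨a, ha⟩).val := by
          have := hf (show (⟨a0 + j, hL⟩ : Fin (a + θ.1 + b)) < ⟨a, ha⟩ by
            rw [Fin.mk_lt_mk]; omega)
          exact this
        have := claim1 a ha le_rfl (by omega)
        omega
      rcases lt_or_ge j (e + θ.1) with h' | h'
      · exact claim1 (a0 + j) hL (by omega) (by omega)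
      · -- suffix points
        have hy' : a + θ.1 - 1 < a + θ.1 + b := by omega
        have hmono : (f ⟨a + θ.1 - 1, hy'⟩).val < (f ⟨a0 + j, hL⟩).val := by
          have := hf (show (⟨a + θ.1 - 1, hy'⟩ : Fin (a + θ.1 + b)) < ⟨a0 + j, hL⟩ by
            rw [Fin.mk_lt_mk]; omega)
          exact this
        have hcl := claim1 (a + θ.1 - 1) hy' (by omega) (by omega)
        have hup := smono_add_le hf (a + θ.1 + b - 1 - (a0 + j)) (a0 + j) hL
          (show a0 + j + (a + θ.1 + b - 1 - (a0 + j)) < a + θ.1 + b by omega)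
        have hlast : (f (⟨a0 + j + (a + θ.1 + b - 1 - (a0 + j)), by omega⟩ :
            Fin (a + θ.1 + b))).val < c + τ.1 + d := Fin.isLt _
        omega
    refine ⟨fun j => ⟨(f (⟨a0 + j.val, by
        have : j.val < e + θ.1 + e' := j.isLt; omega⟩ : Fin (a + θ.1 + b))).val - c, by
      have hjb : j.val < e + θ.1 + e' := j.isLt
      have := hbound j.val j.isLt (by omega); omega⟩, ?_, ?_⟩
    · intro j1 j2 hlt
      rw [Fin.lt_def] at hlt ⊢
      dsimp only
      have hj1b : j1.val < e + θ.1 + e' := j1.isLt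
      have hj2b : j2.val < e + θ.1 + e' := j2.isLt
      have hb1 := hbound j1.val j1.isLt (by omega)
      have hmono : (f (⟨a0 + j1.val, by omega⟩ : Fin (a + θ.1 + b))).val <
          (f (⟨a0 + j2.val, by omega⟩ : Fin (a + θ.1 + b))).val := by
        have := hf (show (⟨a0 + j1.val, by omega⟩ : Fin (a + θ.1 + b)) <
            ⟨a0 + j2.val, by omega⟩ by rw [Fin.mk_lt_mk]; omega)
        exact this
      omega
    · intro s t
      rw [Fin.lt_def, Fin.lt_def]
      dsimp only
      have hsb : s.val < e + θ.1 + e' := s.isLt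
      have htb : t.val < e + θ.1 + e' := t.isLt
      have hLs : a0 + s.val < a + θ.1 + b := by omega
      have hLt : a0 + t.val < a + θ.1 + b := by omega
      have hAs := shift_val θ a b e e' a0 ha0e (by omega) s.val s.isLt hLs
      have hAt := shift_val θ a b e e' a0 ha0e (by omega) t.val t.isLt hLt
      rw [Fin.eta s s.isLt] at hAs
      rw [Fin.eta t t.isLt] at hAt
      have hAs' : ((sumP (sumP (idPat a) θ) (idPat b)).2 (⟨a0 + s.val, hLs⟩ : Fin (a + θ.1 + b))).val =
          a0 + ((sumP (sumP (idPat e) θ) (idPat e')).2 s).val := hAs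
      have hAt' : ((sumP (sumP (idPat a) θ) (idPat b)).2 (⟨a0 + t.val, hLt⟩ : Fin (a + θ.1 + b))).val =
          a0 + ((sumP (sumP (idPat e) θ) (idPat e')).2 t).val := hAt
      have hB := hfv' ⟨a0 + s.val, hLs⟩ ⟨a0 + t.val, hLt⟩
      have hbs := hbound s.val s.isLt hLs
      have hbt := hbound t.val t.isLt hLt
      have hCs := hQm (f ⟨a0 + s.val, hLs⟩) hbs.1 hbs.2
      have hCt := hQm (f ⟨a0 + t.val, hLt⟩) hbt.1 hbt.2
      have hds := (τ.2 ⟨(f ⟨a0 + s.val, hLs⟩).val - c, by omega⟩).isLt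
      have hdt := (τ.2 ⟨(f ⟨a0 + t.val, hLt⟩).val - c, by omega⟩).isLt
      omega
  · rintro ⟨(g : Fin (e + θ.1 + e') → Fin τ.1), hg, hgv⟩
    have hgm : ∀ (x y : ℕ) (hx : x < e + θ.1 + e') (hy : y < e + θ.1 + e'), x < y →
        (g ⟨x, hx⟩).val < (g ⟨y, hy⟩).val := by
      intro x y hx hy h
      have := hg (show (⟨x, hx⟩ : Fin (e + θ.1 + e')) < ⟨y, hy⟩ by rw [Fin.mk_lt_mk]; exact h)
      rwa [Fin.lt_def] at this
    have hgv' : ∀ (x y : ℕ) (hx : x < e + θ.1 + e') (hy : y < e + θ.1 + e'),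
        (((sumP (sumP (idPat e) θ) (idPat e')).2 (⟨x, hx⟩ : Fin (e + θ.1 + e'))).val <
            ((sumP (sumP (idPat e) θ) (idPat e')).2 (⟨y, hy⟩ : Fin (e + θ.1 + e'))).val ↔
          (τ.2 (g ⟨x, hx⟩)).val < (τ.2 (g ⟨y, hy⟩)).val) := by
      intro x y hx hy
      have := hgv ⟨x, hx⟩ ⟨y, hy⟩
      rwa [Fin.lt_def, Fin.lt_def] at this
    -- construct the embedding
    have hex : ∃ F : Fin (a + θ.1 + b) → Fin (c + τ.1 + d),
        ∀ i : Fin (a + θ.1 + b),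
          (i.val < a0 → (F i).val = i.val) ∧
          (∀ hj : a0 ≤ i.val ∧ i.val < a0 + (e + θ.1 + e'),
            (F i).val = c + (g (⟨i.val - a0, by omega⟩ : Fin (e + θ.1 + e'))).val) ∧
          (a0 + (e + θ.1 + e') ≤ i.val →
            (F i).val = c + τ.1 + (i.val - (a0 + (e + θ.1 + e')))) := by
      refine ⟨fun i =>
        if h1 : i.val < a0 then ⟨i.val, by omega⟩
        else if h2 : i.val < a0 + (e + θ.1 + e') then
          ⟨c + (g (⟨i.val - a0, by omega⟩ : Fin (e + θ.1 + e'))).val, by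
            have := (g (⟨i.val - a0, by omega⟩ : Fin (e + θ.1 + e'))).isLt; omega⟩
        else ⟨c + τ.1 + (i.val - (a0 + (e + θ.1 + e'))), by have := i.isLt; omega⟩,
        fun i => ⟨fun h1 => by dsimp only; rw [dif_pos h1], fun hj => by
          dsimp only
          rw [dif_neg (show ¬(i.val < a0) by omega),
            dif_pos (show i.val < a0 + (e + θ.1 + e') by omega)], fun h3 => by
          dsimp only
          rw [dif_neg (show ¬(i.val < a0) by omega),
            dif_neg (show ¬(i.val < a0 + (e + θ.1 + e')) by omega)]⟩⟩
    obtain ⟨F, hF⟩ := hex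
    -- classification of each index
    have classify : ∀ i : Fin (a + θ.1 + b),
        (i.val < a0 ∧ ((sumP (sumP (idPat a) θ) (idPat b)).2 i).val = i.val ∧
          ((sumP (sumP (idPat c) τ) (idPat d)).2 (F i)).val = i.val) ∨
        (∃ hj : a0 ≤ i.val ∧ i.val < a0 + (e + θ.1 + e'),
          ((sumP (sumP (idPat a) θ) (idPat b)).2 i).val =
            a0 + ((sumP (sumP (idPat e) θ) (idPat e')).2 (⟨i.val - a0, by omega⟩ : Fin (e + θ.1 + e'))).val ∧
          ((sumP (sumP (idPat e) θ) (idPat e')).2 (⟨i.val - a0, by omega⟩ : Fin (e + θ.1 + e'))).val < e + θ.1 + e' ∧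
          ((sumP (sumP (idPat c) τ) (idPat d)).2 (F i)).val =
            c + (τ.2 (g (⟨i.val - a0, by omega⟩ : Fin (e + θ.1 + e')))).val ∧
          (τ.2 (g (⟨i.val - a0, by omega⟩ : Fin (e + θ.1 + e')))).val < τ.1) ∨
        (a0 + (e + θ.1 + e') ≤ i.val ∧
          ((sumP (sumP (idPat a) θ) (idPat b)).2 i).val = i.val ∧
          ((sumP (sumP (idPat c) τ) (idPat d)).2 (F i)).val =
            c + τ.1 + (i.val - (a0 + (e + θ.1 + e')))) := by
      intro i
      obtain ⟨hF1, hF2, hF3⟩ := hF i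
      rcases lt_or_ge i.val a0 with h1 | h1
      · left
        have hq : (F i).val = i.val := hF1 h1
        have hq2 := hQ1 (F i) (by omega)
        have hp := hP1 i.val i.isLt (by omega)
        erw [Fin.eta i i.isLt] at hp
        exact ⟨h1, by omega, by omega⟩
      rcases lt_or_ge i.val (a0 + (e + θ.1 + e')) with h2 | h2
      · right; left
        refine ⟨⟨h1, h2⟩, ?_, ?_, ?_, ?_⟩
        · have hp := shift_val' θ a b e e' a0 ha0e (by omega) i.val i.isLt h1 h2
          erw [Fin.eta i i.isLt] at hp
          exact hp
        · exact ((sumP (sumP (idPat e) θ) (idPat e')).2 (⟨i.val - a0, by omega⟩ : Fin (e + θ.1 + e'))).isLt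
        · have hfi := hF2 ⟨h1, h2⟩
          have hgb := (g (⟨i.val - a0, by omega⟩ : Fin (e + θ.1 + e'))).isLt
          have hqm := hQm (F i) (by omega) (by omega)
          have hcg := congrArg (fun z : Fin τ.1 => (τ.2 z).val)
            (show (⟨(F i).val - c, by omega⟩ : Fin τ.1) = g (⟨i.val - a0, by omega⟩ : Fin (e + θ.1 + e')) from
              Fin.ext (by simp only; omega))
          beta_reduce at hcg
          omega
        · exact (τ.2 (g (⟨i.val - a0, by omega⟩ : Fin (e + θ.1 + e')))).isLt
      · right; right
        have hq : (F i).val = c + τ.1 + (i.val - (a0 + (e + θ.1 + e'))) := hF3 h2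
        have hq2 := hQ3 (F i) (by omega)
        have hp := hP3 i.val i.isLt (by omega)
        erw [Fin.eta i i.isLt] at hp
        exact ⟨h2, by omega, by omega⟩
    refine ⟨F, ?_, ?_⟩
    · intro i1 i2 hlt
      change i1.val < i2.val at hlt; change (F i1).val < (F i2).val
      obtain ⟨h11, h12, h13⟩ := hF i1
      obtain ⟨h21, h22, h23⟩ := hF i2
      have hg1 := fun (hj : a0 ≤ i1.val ∧ i1.val < a0 + (e + θ.1 + e')) =>
        (g (⟨i1.val - a0, by omega⟩ : Fin (e + θ.1 + e'))).isLt
      have hg2 := fun (hj : a0 ≤ i2.val ∧ i2.val < a0 + (e + θ.1 + e')) =>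
        (g (⟨i2.val - a0, by omega⟩ : Fin (e + θ.1 + e'))).isLt
      rcases lt_or_ge i1.val a0 with hb1 | hb1
      · rcases lt_or_ge i2.val a0 with hb2 | hb2
        · rw [h11 hb1, h21 hb2]; omega
        · rcases lt_or_ge i2.val (a0 + (e + θ.1 + e')) with hc2 | hc2
          · rw [h11 hb1, h22 ⟨hb2, hc2⟩]
            have := hg2 ⟨hb2, hc2⟩
            omega
          · rw [h11 hb1, h23 hc2]; omega
      · rcases lt_or_ge i1.val (a0 + (e + θ.1 + e')) with hc1 | hc1
        · rcases lt_or_ge i2.val a0 with hb2 | hb2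
          · omega
          · rcases lt_or_ge i2.val (a0 + (e + θ.1 + e')) with hc2 | hc2
            · rw [h12 ⟨hb1, hc1⟩, h22 ⟨hb2, hc2⟩]
              have := hgm (i1.val - a0) (i2.val - a0) (by omega) (by omega) (by omega)
              omega
            · rw [h12 ⟨hb1, hc1⟩, h23 hc2]
              have := hg1 ⟨hb1, hc1⟩
              omega
        · rcases lt_or_ge i2.val a0 with hb2 | hb2
          · omega
          · rcases lt_or_ge i2.val (a0 + (e + θ.1 + e')) with hc2 | hc2
            · omega
            · rw [h13 hc1, h23 hc2]; omega
    · intro s t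
      rw [Fin.lt_def, Fin.lt_def]
      rcases classify s with ⟨hs1, hsP, hsQ⟩ | ⟨⟨hs1, hs2⟩, hsP, hsb, hsQ, hsb2⟩ | ⟨hs1, hsP, hsQ⟩ <;>
        rcases classify t with ⟨ht1, htP, htQ⟩ | ⟨⟨ht1, ht2⟩, htP, htb, htQ, htb2⟩ | ⟨ht1, htP, htQ⟩
      all_goals try omega
      have := hgv' (s.val - a0) (t.val - a0) (by omega) (by omega)
      omega
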